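/- Let q ≥ 4 be even, θ = π/q, and U = [[2cos θ, -1], [1, 0]], S = [[0, 1], [-1, 0]]. Then sin(θ) · U^{q/2}·S = [[1, cos θ], [cos θ, 1]]. In particular the matrix g := U^{q/2}·S satisfies g.1 = 1 and g.(-1) = -1 under the Möbius action, has determinant 1, and has trace 2/sin θ > 2 (hence is hyperbolic). -/

import Mathlib

open Real Matrix

lemma cheb (θ : ℝ) : ∀ k : ℕ,
    Real.sin θ • (!![2 * Real.cos θ, -1; (1:ℝ), 0]) ^ k =
    !![Real.sin ((k + 1) * θ), -Real.sin (k * θ);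
       Real.sin (k * θ), -Real.sin (((k:ℝ) - 1) * θ)] := by
  intro k
  induction k with
  | zero =>
    ext i j
    fin_cases i <;> fin_cases j <;>
      simp [Matrix.one_apply, Real.sin_neg]
  | succ k ih =>
    rw [pow_succ, ← smul_mul_assoc, ih, Matrix.mul_fin_two]
    push_cast
    have h1 := Real.sin_add ((k + 1) * θ) θ
    have h2 := Real.sin_sub ((k + 1) * θ) θ
    have h3 := Real.sin_add ((k:ℝ) * θ) θ
    have h4 := Real.sin_sub ((k:ℝ) * θ) θ
    ext i j
    fin_cases i <;> fin_cases j <;> simp <;> ring_nf <;> ring_nf at h1 h2 h3 h4 <;> linarith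

theorem stmt_7 (q : ℕ) (hq : 4 ≤ q) (heven : Even q) (θ : ℝ) (hθ : θ = Real.pi / q)
    (U S : Matrix (Fin 2) (Fin 2) ℝ)
    (hU : U = !![2 * Real.cos θ, -1; 1, 0])
    (hS : S = !![0, 1; -1, 0])
    (g : Matrix (Fin 2) (Fin 2) ℝ) (hg : g = U ^ (q / 2) * S) :
    Real.sin θ • g = !![1, Real.cos θ; Real.cos θ, 1] ∧
    (g 0 0 * 1 + g 0 1) / (g 1 0 * 1 + g 1 1) = 1 ∧
    (g 0 0 * (-1) + g 0 1) / (g 1 0 * (-1) + g 1 1) = -1 ∧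
    g.det = 1 ∧
    g.trace = 2 / Real.sin θ ∧
    2 / Real.sin θ > 2 := by
  have hq0 : (0:ℝ) < q := by positivity
  have hθpos : 0 < θ := by rw [hθ]; positivity
  have hθle : θ ≤ Real.pi / 4 := by
    rw [hθ]
    gcongr <;> first
      | exact Real.pi_pos.le
      | exact_mod_cast hq
  have hθlt : θ < Real.pi / 2 := lt_of_le_of_lt hθle (by linarith [Real.pi_pos])
  have hsin : 0 < Real.sin θ :=
    Real.sin_pos_of_pos_of_lt_pi hθpos (by linarith [Real.pi_pos])
  have hcos : 0 < Real.cos θ := Real.cos_pos_of_mem_Ioo ⟨by linarith, hθlt⟩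
  have hsq := Real.sin_sq_add_cos_sq θ
  have hsin1 : Real.sin θ < 1 := by nlinarith
  have hcos1 : Real.cos θ < 1 := by nlinarith
  obtain ⟨n, hn⟩ := heven
  have hq2 : q / 2 = n := by omega
  have hn0 : 0 < n := by omega
  have hnθ : (n : ℝ) * θ = Real.pi / 2 := by
    rw [hθ, hn]
    push_cast
    have h : (n:ℝ) ≠ 0 := by exact_mod_cast hn0.ne'
    field_simp
    ring
  have hUn : Real.sin θ • U ^ (q / 2) =
      !![Real.cos θ, -1; 1, -Real.cos θ] := by
    rw [hq2, hU, cheb θ n]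
    have e1 : Real.sin (((n:ℝ) + 1) * θ) = Real.cos θ := by
      rw [add_mul, one_mul, hnθ, Real.sin_add]; simp
    have e2 : Real.sin ((n:ℝ) * θ) = 1 := by rw [hnθ, Real.sin_pi_div_two]
    have e3 : Real.sin (((n:ℝ) - 1) * θ) = Real.cos θ := by
      rw [sub_mul, one_mul, hnθ, Real.sin_sub]; simp
    rw [e1, e2, e3]
  have hsm : Real.sin θ • g = !![1, Real.cos θ; Real.cos θ, 1] := by
    rw [hg, ← smul_mul_assoc, hUn, hS, Matrix.mul_fin_two]
    norm_num
  clear hUn hg hU hS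
  have e00 : Real.sin θ * g 0 0 = 1 := by
    have := congrFun (congrFun hsm 0) 0; simpa using this
  have e01 : Real.sin θ * g 0 1 = Real.cos θ := by
    have := congrFun (congrFun hsm 0) 1; simpa using this
  have e10 : Real.sin θ * g 1 0 = Real.cos θ := by
    have := congrFun (congrFun hsm 1) 0; simpa using this
  have e11 : Real.sin θ * g 1 1 = 1 := by
    have := congrFun (congrFun hsm 1) 1; simpa using this
  have hg00 : g 0 0 = 1 / Real.sin θ := by rw [eq_div_iff hsin.ne']; linarith
  have hg01 : g 0 1 = Real.cos θ / Real.sin θ := by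
    rw [eq_div_iff hsin.ne']; linarith
  have hg10 : g 1 0 = Real.cos θ / Real.sin θ := by
    rw [eq_div_iff hsin.ne']; linarith
  have hg11 : g 1 1 = 1 / Real.sin θ := by rw [eq_div_iff hsin.ne']; linarith
  have hcs : 0 < Real.cos θ / Real.sin θ := div_pos hcos hsin
  have h1s : 0 < 1 / Real.sin θ := by positivity
  refine ⟨hsm, ?_, ?_, ?_, ?_, ?_⟩
  · rw [hg00, hg01, hg10, hg11]
    have hden : 0 < Real.cos θ / Real.sin θ * 1 + 1 / Real.sin θ := by linarith
    rw [div_eq_one_iff_eq hden.ne']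
    ring
  · rw [hg00, hg01, hg10, hg11]
    have hden : 0 < Real.cos θ / Real.sin θ * (-1) + 1 / Real.sin θ := by
      have h : Real.cos θ / Real.sin θ * (-1) + 1 / Real.sin θ =
          (1 - Real.cos θ) / Real.sin θ := by ring
      rw [h]
      exact div_pos (by linarith) hsin
    have hnum : 1 / Real.sin θ * (-1) + Real.cos θ / Real.sin θ =
        -(Real.cos θ / Real.sin θ * (-1) + 1 / Real.sin θ) := by ring
    rw [hnum, neg_div, div_self hden.ne']
  · rw [Matrix.det_fin_two, hg00, hg01, hg10, hg11]
    field_simp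
    nlinarith
  · rw [Matrix.trace_fin_two, hg00, hg11]
    ring
  · rw [gt_iff_lt, lt_div_iff₀ hsin]
    nlinarith
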